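/- Let R → S be a faithfully flat homomorphism of commutative rings. If S is a valuation domain, then R is a valuation domain; and if S is a Prüfer domain, then R is a Prüfer domain. -/
import Mathlib


section OhmRushDefs

variable {R S : Type*} [CommRing R] [CommRing S]

/-- The Ohm–Rush content of an element `s` of an `R`-algebra `S` (given by a ring
homomorphism `f : R →+* S`): the intersection of all ideals `I` of `R` with `s ∈ IS`. -/
def ORContent (f : R →+* S) (s : S) : Ideal R :=
  sInf {I : Ideal R | s ∈ Ideal.map f I}

/-- `S` is an Ohm–Rush `R`-algebra if every `s ∈ S` lies in the extension of its content. -/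
def IsOhmRushAlgebra (f : R →+* S) : Prop :=
  ∀ s : S, s ∈ Ideal.map f (ORContent f s)

/-- Flatness of a ring homomorphism. -/
def RingHomFlat (f : R →+* S) : Prop :=
  letI := f.toAlgebra; Module.Flat R S

/-- Faithful flatness of a ring homomorphism. -/
def RingHomFaithfullyFlat (f : R →+* S) : Prop :=
  letI := f.toAlgebra; Module.FaithfullyFlat R S

/-- Module-freeness of a ring homomorphism. -/
def RingHomFree (f : R →+* S) : Prop :=
  letI := f.toAlgebra; Module.Free R S

/-- Weak content algebra: Ohm–Rush and `√c(fg) = √(c(f)c(g))`. -/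
def IsWeakContentAlgebra (f : R →+* S) : Prop :=
  IsOhmRushAlgebra f ∧ ∀ s t : S,
    (ORContent f (s * t)).radical = (ORContent f s * ORContent f t).radical

/-- Semicontent algebra: faithfully flat Ohm–Rush, and for every multiplicative subset `W`
of `R`, if `c(s)R_W = R_W` then `c(st)R_W = c(t)R_W`. -/
def IsSemicontentAlgebra (f : R →+* S) : Prop :=
  IsOhmRushAlgebra f ∧ RingHomFaithfullyFlat f ∧
    ∀ (W : Submonoid R) (s t : S),
      Ideal.map (algebraMap R (Localization W)) (ORContent f s) = ⊤ →
      Ideal.map (algebraMap R (Localization W)) (ORContent f (s * t)) =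
        Ideal.map (algebraMap R (Localization W)) (ORContent f t)

/-- Content algebra: faithfully flat Ohm–Rush satisfying the Dedekind–Mertens type formula. -/
def IsContentAlgebra (f : R →+* S) : Prop :=
  IsOhmRushAlgebra f ∧ RingHomFaithfullyFlat f ∧
    ∀ s t : S, ∃ n : ℕ, 0 < n ∧
      ORContent f s ^ n * ORContent f t = ORContent f s ^ (n - 1) * ORContent f (s * t)

/-- A ring homomorphism satisfies INC if comparable primes of `S` with the same
contraction to `R` are equal. -/
def SatisfiesINC (f : R →+* S) : Prop :=
  ∀ Q Q' : Ideal S, Q.IsPrime → Q'.IsPrime → Q ≤ Q' →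
    Ideal.comap f Q = Ideal.comap f Q' → Q = Q'

/-- A valuation domain: a domain whose divisibility is total. -/
def IsValuationDomain (A : Type*) [CommRing A] : Prop :=
  IsDomain A ∧ ∀ a b : A, ∃ c : A, a * c = b ∨ b * c = a

/-- A Prüfer domain: a domain whose localization at every maximal ideal is a
valuation domain. -/
def IsPruferDomain (A : Type*) [CommRing A] : Prop :=
  IsDomain A ∧ ∀ (P : Ideal A) (hP : P.IsMaximal),
    haveI := hP.isPrime
    IsValuationDomain (Localization.AtPrime P)

end OhmRushDefs



open TensorProduct

section AuxFF

variable {R S : Type*} [CommRing R] [CommRing S] [Algebra R S]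

lemma ff_pure_tmul [Module.FaithfullyFlat R S] {N : Type*} [AddCommGroup N] [Module R N]
    (n : N) (h : n ⊗ₜ[R] (1 : S) = 0) : n = 0 := by
  set I : Ideal R := (Submodule.span R {n}).annihilator with hIdef
  let inc : R ⧸ I →ₗ[R] N := Submodule.liftQ _ ((LinearMap.lsmul R N).flip n) <| fun r hr => by
    simpa only [LinearMap.mem_ker, LinearMap.flip_apply, LinearMap.lsmul_apply,
      Submodule.mem_annihilator_span_singleton, hIdef] using hr
  have injective_inc : Function.Injective inc := by
    rw [← LinearMap.ker_eq_bot]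
    refine eq_bot_iff.2 ?_
    intro r hr
    induction r using Quotient.inductionOn' with | h r =>
    simpa only [Submodule.Quotient.mk''_eq_mk, Submodule.mem_bot, Submodule.Quotient.mk_eq_zero,
      Submodule.mem_annihilator_span_singleton, LinearMap.mem_ker, Submodule.liftQ_apply,
      LinearMap.flip_apply, LinearMap.lsmul_apply, hIdef, inc] using hr
  have hinj2 := Module.Flat.rTensor_preserves_injective_linearMap (M := S) inc injective_inc
  have h0 : (Ideal.Quotient.mk I 1 : R ⧸ I) ⊗ₜ[R] (1 : S) = 0 := by
    apply hinj2
    rw [map_zero, LinearMap.rTensor_tmul]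
    have hinc1 : inc (Ideal.Quotient.mk I 1) = n := by
      show ((LinearMap.lsmul R N).flip n) 1 = n
      simp
    rw [hinc1, h]
  have h1 : (1 : S) ∈ I • (⊤ : Submodule R S) := by
    have h2 := congrArg (quotTensorEquivQuotSMul S I) h0
    rw [map_zero, quotTensorEquivQuotSMul_mk_tmul, one_smul] at h2
    rwa [← Submodule.Quotient.mk_eq_zero]
  have hI : I = ⊤ := by
    by_contra hne
    refine (Module.FaithfullyFlat.iff_flat_and_proper_ideal R S).mp inferInstance |>.2 I hne ?_
    rw [Ideal.smul_top_eq_map] at h1 ⊢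
    have htop : Ideal.map (algebraMap R S) I = ⊤ := (Ideal.eq_top_iff_one _).mpr h1
    rw [htop]
    simp
  have h1R : (1 : R) ∈ I := hI ▸ Submodule.mem_top
  rw [hIdef] at h1R
  have := (Submodule.mem_annihilator_span_singleton n 1).mp h1R
  rwa [one_smul] at this

lemma ff_comap_map [Module.FaithfullyFlat R S] (I : Ideal R) :
    (I.map (algebraMap R S)).comap (algebraMap R S) = I := by
  refine le_antisymm ?_ Ideal.le_comap_map
  intro x hx
  rw [Ideal.mem_comap] at hx
  have h0 : (Ideal.Quotient.mk I x : R ⧸ I) ⊗ₜ[R] (1 : S) = 0 := by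
    apply (quotTensorEquivQuotSMul S I).injective
    rw [map_zero, quotTensorEquivQuotSMul_mk_tmul, Submodule.Quotient.mk_eq_zero,
      Ideal.smul_top_eq_map, Submodule.restrictScalars_mem]
    rw [Algebra.smul_def x (1 : S), mul_one]
    exact hx
  have := ff_pure_tmul _ h0
  rwa [Ideal.Quotient.eq_zero_iff_mem] at this

lemma ff_colon_le_map [Module.FaithfullyFlat R S] (a b : R) :
    (Ideal.span {algebraMap R S a}).colon (Ideal.span {algebraMap R S b}) ≤
      ((Ideal.span {a}).colon (Ideal.span {b})).map (algebraMap R S) := by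
  intro s hs
  have hsb : s * algebraMap R S b ∈ Ideal.span {algebraMap R S a} :=
    Ideal.mem_colon_span_singleton.mp hs
  set A : Ideal R := (Ideal.span {a}).colon (Ideal.span {b}) with hA
  set N := R ⧸ (Ideal.span {a} : Ideal R) with hN
  set φ : R →ₗ[R] N := LinearMap.toSpanSingleton R N (Ideal.Quotient.mk _ b) with hφ
  set ι : A →ₗ[R] R := Submodule.subtype (A : Submodule R R) with hι
  have hexact : Function.Exact ι φ := by
    rw [LinearMap.exact_iff, Submodule.range_subtype]
    ext r
    rw [LinearMap.mem_ker, hφ, LinearMap.toSpanSingleton_apply, hA]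
    have hsmul : r • (Ideal.Quotient.mk (Ideal.span {a}) b)
        = Ideal.Quotient.mk (Ideal.span {a}) (r * b) := by
      rw [← smul_eq_mul]
      exact (Submodule.Quotient.mk_smul (Ideal.span {a}) r b).symm
    rw [hsmul, Ideal.Quotient.eq_zero_iff_mem, Ideal.mem_colon_span_singleton]
  have hex2 := Module.Flat.rTensor_exact S hexact
  have hmem0 : φ.rTensor S ((1 : R) ⊗ₜ[R] s) = 0 := by
    rw [LinearMap.rTensor_tmul]
    apply (quotTensorEquivQuotSMul S _).injective
    rw [map_zero]
    rw [show φ 1 = Ideal.Quotient.mk (Ideal.span {a}) b by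
      rw [hφ, LinearMap.toSpanSingleton_apply, one_smul]]
    rw [quotTensorEquivQuotSMul_mk_tmul, Submodule.Quotient.mk_eq_zero]
    obtain ⟨c, hc⟩ := Ideal.mem_span_singleton.mp hsb
    have hbs : b • s = a • c := by
      rw [Algebra.smul_def b s, Algebra.smul_def a c, mul_comm]
      exact hc
    rw [hbs]
    exact Submodule.smul_mem_smul (Ideal.mem_span_singleton_self a) Submodule.mem_top
  obtain ⟨ξ, hξ⟩ := (hex2 ((1 : R) ⊗ₜ[R] s)).mp hmem0
  have hgen : ∀ ξ : A ⊗[R] S,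
      TensorProduct.lid R S (ι.rTensor S ξ) ∈ A.map (algebraMap R S) := by
    intro ξ
    induction ξ using TensorProduct.induction_on with
    | zero => simp
    | tmul x t =>
      rw [LinearMap.rTensor_tmul, TensorProduct.lid_tmul, hι, Submodule.subtype_apply,
        Algebra.smul_def]
      exact Ideal.mul_mem_right _ _ (Ideal.mem_map_of_mem _ x.2)
    | add u v hu hv =>
      rw [map_add, map_add]
      exact Ideal.add_mem _ hu hv
  have hs' : s = TensorProduct.lid R S (ι.rTensor S ξ) := by
    rw [hξ, TensorProduct.lid_tmul, one_smul]
  rw [hs']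
  exact hgen ξ

end AuxFF

section Helpers


/-- In a valuation localization at a maximal ideal, divisibility of images yields a
witness outside the maximal ideal. -/
lemma loc_dvd_witness {S : Type*} [CommRing S] (M : Ideal S) [M.IsPrime]
    (u v : S) (c : Localization.AtPrime M)
    (hc : algebraMap S (Localization.AtPrime M) u * c = algebraMap S (Localization.AtPrime M) v) :
    ∃ σ : S, σ ∉ M ∧ σ * v ∈ Ideal.span {u} := by
  induction c using Localization.induction_on with | H p =>
  obtain ⟨s, σ⟩ := p
  rw [← Localization.mk_one_eq_algebraMap, ← Localization.mk_one_eq_algebraMap,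
    Localization.mk_mul, Localization.mk_eq_mk_iff, Localization.r_iff_exists] at hc
  obtain ⟨τ, hτ⟩ := hc
  simp only [Submonoid.coe_mul, OneMemClass.coe_one, one_mul] at hτ
  refine ⟨(τ : S) * (σ : S), fun hmem => ?_, ?_⟩
  · exact (M.primeCompl.mul_mem τ.2 σ.2) hmem
  · rw [Ideal.mem_span_singleton]
    exact ⟨(τ : S) * s, by rw [mul_assoc, ← hτ]; ring⟩

end Helpers

/-- Faithfully flat descent: if `R → S` is faithfully flat and `S` is a
valuation domain (resp. a Prüfer domain), then so is `R`. -/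
theorem valuation_and_prufer_descend_of_faithfullyFlat {R S : Type*}
    [CommRing R] [CommRing S] (f : R →+* S) (hff : RingHomFaithfullyFlat f) :
    (IsValuationDomain S → IsValuationDomain R) ∧
    (IsPruferDomain S → IsPruferDomain R) := by
  letI := f.toAlgebra
  haveI : Module.FaithfullyFlat R S := hff
  have halg : algebraMap R S = f := rfl
  have hinj : Function.Injective f := by
    rw [injective_iff_map_eq_zero]
    intro x hx
    have hx' : x ∈ ((⊥ : Ideal R).map (algebraMap R S)).comap (algebraMap R S) := by
      rw [Ideal.map_bot, Ideal.mem_comap, halg, hx]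
      exact Ideal.zero_mem ⊥
    rwa [ff_comap_map, Ideal.mem_bot] at hx'
  have hdvd : ∀ a b : R, (f a ∣ f b) → a ∣ b := by
    intro a b hab
    have : b ∈ ((Ideal.span {a}).map (algebraMap R S)).comap (algebraMap R S) := by
      rw [Ideal.mem_comap, Ideal.map_span, Set.image_singleton, halg]
      exact Ideal.mem_span_singleton.mpr hab
    rw [ff_comap_map] at this
    exact Ideal.mem_span_singleton.mp this
  constructor
  · rintro ⟨hSdom, hSval⟩
    haveI := hSdom
    have hRdom : IsDomain R := Function.Injective.isDomain f hinj
    refine ⟨hRdom, fun a b => ?_⟩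
    obtain ⟨c, hc | hc⟩ := hSval (f a) (f b)
    · obtain ⟨c', hc'⟩ := hdvd a b ⟨c, hc.symm⟩
      exact ⟨c', Or.inl hc'.symm⟩
    · obtain ⟨c', hc'⟩ := hdvd b a ⟨c, hc.symm⟩
      exact ⟨c', Or.inr hc'.symm⟩
  · rintro ⟨hSdom, hSpruf⟩
    haveI := hSdom
    haveI hRdom : IsDomain R := Function.Injective.isDomain f hinj
    -- the colon ideals sup to ⊤ in S
    have hS : ∀ a b : R,
        ((Ideal.span {algebraMap R S a}).colon (Ideal.span {algebraMap R S b})) ⊔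
          ((Ideal.span {algebraMap R S b}).colon (Ideal.span {algebraMap R S a})) = ⊤ := by
      intro a b
      by_contra hne
      obtain ⟨M, hM, hle⟩ := Ideal.exists_le_maximal _ hne
      haveI := hM.isPrime
      obtain ⟨c, hc | hc⟩ := (hSpruf M hM).2
        (algebraMap S (Localization.AtPrime M) (algebraMap R S a))
        (algebraMap S (Localization.AtPrime M) (algebraMap R S b))
      · obtain ⟨σ, hσM, hσ⟩ := loc_dvd_witness M _ _ c hc
        exact hσM (hle (le_sup_left (α := Ideal S) (Ideal.mem_colon_span_singleton.mpr hσ)))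
      · obtain ⟨σ, hσM, hσ⟩ := loc_dvd_witness M _ _ c hc
        exact hσM (hle (le_sup_right (α := Ideal S) (Ideal.mem_colon_span_singleton.mpr hσ)))
    -- descend to R
    have hAB : ∀ a b : R,
        ((Ideal.span {a}).colon (Ideal.span {b})) ⊔
          ((Ideal.span {b}).colon (Ideal.span {a})) = ⊤ := by
      intro a b
      have hmap : (((Ideal.span {a}).colon (Ideal.span {b})) ⊔
          ((Ideal.span {b}).colon (Ideal.span {a}))).map (algebraMap R S) = ⊤ := by
        rw [Ideal.map_sup, eq_top_iff, ← hS a b]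
        exact sup_le_sup (ff_colon_le_map a b) (ff_colon_le_map b a)
      have h2 := ff_comap_map (R := R) (S := S)
        (((Ideal.span {a}).colon (Ideal.span {b})) ⊔ ((Ideal.span {b}).colon (Ideal.span {a})))
      rw [← h2, hmap, Ideal.comap_top]
    refine ⟨hRdom, fun P hP => ?_⟩
    haveI := hP.isPrime
    haveI hdomloc : IsDomain (Localization.AtPrime P) :=
      IsLocalization.isDomain_localization P.primeCompl_le_nonZeroDivisors
    have keyR : ∀ a b : R, ∃ c : Localization.AtPrime P,
        algebraMap R (Localization.AtPrime P) a * c = algebraMap R (Localization.AtPrime P) b ∨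
        algebraMap R (Localization.AtPrime P) b * c = algebraMap R (Localization.AtPrime P) a := by
      intro a b
      have h1 : (1 : R) ∈ ((Ideal.span {a}).colon (Ideal.span {b})) ⊔
          ((Ideal.span {b}).colon (Ideal.span {a})) := by
        rw [hAB a b]; trivial
      obtain ⟨t₁, ht₁, t₂, ht₂, hsum⟩ := Submodule.mem_sup.mp h1
      by_cases hP1 : t₁ ∈ P
      · have hP2 : t₂ ∉ P := by
          intro h2
          exact hP.ne_top ((Ideal.eq_top_iff_one P).mpr (hsum ▸ P.add_mem hP1 h2))
        obtain ⟨r, hr⟩ := Ideal.mem_span_singleton'.mp (Ideal.mem_colon_span_singleton.mp ht₂)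
        refine ⟨Localization.mk r ⟨t₂, hP2⟩, Or.inr ?_⟩
        rw [← Localization.mk_one_eq_algebraMap, ← Localization.mk_one_eq_algebraMap,
          Localization.mk_mul, Localization.mk_eq_mk_iff, Localization.r_iff_exists]
        refine ⟨1, ?_⟩
        simp only [Submonoid.coe_mul, OneMemClass.coe_one, one_mul]
        rw [mul_comm b r, hr]
      · obtain ⟨r, hr⟩ := Ideal.mem_span_singleton'.mp (Ideal.mem_colon_span_singleton.mp ht₁)
        refine ⟨Localization.mk r ⟨t₁, hP1⟩, Or.inl ?_⟩
        rw [← Localization.mk_one_eq_algebraMap, ← Localization.mk_one_eq_algebraMap,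
          Localization.mk_mul, Localization.mk_eq_mk_iff, Localization.r_iff_exists]
        refine ⟨1, ?_⟩
        simp only [Submonoid.coe_mul, OneMemClass.coe_one, one_mul]
        rw [mul_comm a r, hr]
    refine ⟨hdomloc, fun x y => ?_⟩
    induction x using Localization.induction_on with | H p =>
    induction y using Localization.induction_on with | H q =>
    obtain ⟨a, s⟩ := p
    obtain ⟨b, t⟩ := q
    have h1 : Localization.mk a s * Localization.mk (s : R) 1
        = algebraMap R (Localization.AtPrime P) a := by
      rw [← Localization.mk_one_eq_algebraMap, Localization.mk_mul,
        Localization.mk_eq_mk_iff, Localization.r_iff_exists]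
      exact ⟨1, by simp [mul_comm]⟩
    have h2 : Localization.mk b t * Localization.mk (t : R) 1
        = algebraMap R (Localization.AtPrime P) b := by
      rw [← Localization.mk_one_eq_algebraMap, Localization.mk_mul,
        Localization.mk_eq_mk_iff, Localization.r_iff_exists]
      exact ⟨1, by simp [mul_comm]⟩
    have h3 : algebraMap R (Localization.AtPrime P) b * Localization.mk 1 t
        = Localization.mk b t := by
      rw [← Localization.mk_one_eq_algebraMap, Localization.mk_mul, mul_one, one_mul]
    have h4 : algebraMap R (Localization.AtPrime P) a * Localization.mk 1 s
        = Localization.mk a s := by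
      rw [← Localization.mk_one_eq_algebraMap, Localization.mk_mul, mul_one, one_mul]
    obtain ⟨c, hc | hc⟩ := keyR a b
    · refine ⟨Localization.mk (s : R) 1 * c * Localization.mk 1 t, Or.inl ?_⟩
      calc Localization.mk a s * (Localization.mk (s : R) 1 * c * Localization.mk 1 t)
          = ((Localization.mk a s * Localization.mk (s : R) 1) * c) * Localization.mk 1 t := by
            ring
        _ = (algebraMap R (Localization.AtPrime P) a * c) * Localization.mk 1 t := by rw [h1]
        _ = algebraMap R (Localization.AtPrime P) b * Localization.mk 1 t := by rw [hc]
        _ = Localization.mk b t := h3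
    · refine ⟨Localization.mk (t : R) 1 * c * Localization.mk 1 s, Or.inr ?_⟩
      calc Localization.mk b t * (Localization.mk (t : R) 1 * c * Localization.mk 1 s)
          = ((Localization.mk b t * Localization.mk (t : R) 1) * c) * Localization.mk 1 s := by
            ring
        _ = (algebraMap R (Localization.AtPrime P) b * c) * Localization.mk 1 s := by rw [h2]
        _ = algebraMap R (Localization.AtPrime P) a * Localization.mk 1 s := by rw [hc]
        _ = Localization.mk a s := h4
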